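/- arXiv:q-alg/9506016 — 4 statements merged into one kernel-verified Lean document; each statement's English description precedes it below -/
import Mathlib

section
/- With G_{j,j+1} defined as G_{j,j+1} = ((q⁻¹z_j − q z_{j+1})/(z_j − z_{j+1}))(K_{j,j+1} − 1) + q acting on ℂ(z₁,…,z_N), the operators G_{1,2},…,G_{N-1,N} satisfy the braid relations: G_{j,j+1}G_{k,k+1} = G_{k,k+1}G_{j,j+1} for |j−k| > 1 and G_{j,j+1}G_{j+1,j+2}G_{j,j+1} = G_{j+1,j+2}G_{j,j+1}G_{j+1,j+2}. -/
set_option maxHeartbeats 1000000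

/-- The exchange operator `K_{j,k}` on functions of `z₁,…,z_N`. -/
def Kex {N : ℕ} (j k : Fin N) (f : (Fin N → ℂ) → ℂ) : (Fin N → ℂ) → ℂ :=
  fun z => f (z ∘ Equiv.swap j k)

/-- `G_{j,k} = ((q⁻¹ z_j − q z_k)/(z_j − z_k)) (K_{j,k} − 1) + q`. -/
noncomputable def Gop {N : ℕ} (q : ℂ) (j k : Fin N) (f : (Fin N → ℂ) → ℂ) :
    (Fin N → ℂ) → ℂ :=
  fun z => (q⁻¹ * z j - q * z k) / (z j - z k) * (Kex j k f z - f z) + q * f z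

/-- `G_{j,j+1}` (0-indexed: acts on the variables `z_j, z_{j+1}`). -/
noncomputable def Gadj {N : ℕ} (q : ℂ) (j : ℕ) (hj : j + 1 < N) :
    ((Fin N → ℂ) → ℂ) → (Fin N → ℂ) → ℂ :=
  Gop q ⟨j, by omega⟩ ⟨j + 1, hj⟩

/-- the operators `G_{j,j+1}` satisfy the braid relations
(stated at points `z` with pairwise distinct coordinates, i.e. as identities of
operators on rational functions): commutation for `|j − k| > 1` and the braid
relation for adjacent indices. -/
theorem Gop_braid_relations {N : ℕ} (q : ℂ) (hq0 : q ≠ 0) (hq2 : q ^ 2 ≠ 1) :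
    (∀ (j k : ℕ) (hj : j + 1 < N) (hk : k + 1 < N), (j + 1 < k ∨ k + 1 < j) →
      ∀ (f : (Fin N → ℂ) → ℂ) (z : Fin N → ℂ), Function.Injective z →
        Gadj q j hj (Gadj q k hk f) z = Gadj q k hk (Gadj q j hj f) z) ∧
    (∀ (j : ℕ) (hj : j + 2 < N),
      ∀ (f : (Fin N → ℂ) → ℂ) (z : Fin N → ℂ), Function.Injective z →
        Gadj q j (by omega) (Gadj q (j + 1) (by omega) (Gadj q j (by omega) f)) z
          = Gadj q (j + 1) (by omega) (Gadj q j (by omega)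
              (Gadj q (j + 1) (by omega) f)) z) := by
  constructor
  · intro j k hj hk h f z hz
    set j0 : Fin N := ⟨j, by omega⟩ with hj0
    set j1 : Fin N := ⟨j+1, hj⟩ with hj1
    set k0 : Fin N := ⟨k, by omega⟩ with hk0
    set k1 : Fin N := ⟨k+1, hk⟩ with hk1
    have h1 : j0 ≠ k0 := by simp [j0, k0, Fin.ext_iff]; omega
    have h2 : j0 ≠ k1 := by simp [j0, k1, Fin.ext_iff]; omega
    have h3 : j1 ≠ k0 := by simp [j1, k0, Fin.ext_iff]; omega
    have h4 : j1 ≠ k1 := by simp [j1, k1, Fin.ext_iff]; omega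
    have hcomm : (z ∘ ⇑(Equiv.swap j0 j1)) ∘ ⇑(Equiv.swap k0 k1)
        = (z ∘ ⇑(Equiv.swap k0 k1)) ∘ ⇑(Equiv.swap j0 j1) := by
      ext x
      simp only [Function.comp_apply]
      congr 1
      simp only [Equiv.swap_apply_def]
      split_ifs <;> simp_all
    simp only [Gadj, Gop, Kex, ← hj0, ← hj1, ← hk0, ← hk1]
    rw [hcomm]
    simp only [Function.comp_apply,
      Equiv.swap_apply_left, Equiv.swap_apply_right,
      Equiv.swap_apply_of_ne_of_ne h1 h2, Equiv.swap_apply_of_ne_of_ne h3 h4,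
      Equiv.swap_apply_of_ne_of_ne h1.symm h3.symm,
      Equiv.swap_apply_of_ne_of_ne h2.symm h4.symm]
    ring
  · intro j hj f z hz
    set j0 : Fin N := ⟨j, by omega⟩ with hj0
    set j1 : Fin N := ⟨j+1, by omega⟩ with hj1
    set j2 : Fin N := ⟨j+2, by omega⟩ with hj2
    have h01 : j0 ≠ j1 := by simp [j0, j1, Fin.ext_iff]
    have h02 : j0 ≠ j2 := by simp [j0, j2, Fin.ext_iff]
    have h12 : j1 ≠ j2 := by simp [j1, j2, Fin.ext_iff]
    set s := Equiv.swap j0 j1 with hs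
    set t := Equiv.swap j1 j2 with ht
    have hperm : s * t * s = t * s * t := by
      have h1 : Equiv.swap (s j1) (s j2) = s * t * s⁻¹ := Equiv.swap_apply_apply s j1 j2
      have h2 : Equiv.swap (t j0) (t j1) = t * s * t⁻¹ := Equiv.swap_apply_apply t j0 j1
      rw [Equiv.swap_apply_right, Equiv.swap_apply_of_ne_of_ne h02.symm h12.symm,
        Equiv.swap_inv] at h1
      rw [Equiv.swap_apply_of_ne_of_ne h01 h02, Equiv.swap_apply_left,
        Equiv.swap_inv] at h2
      rw [← h1, ← h2]
    have hss : (z ∘ ⇑s) ∘ ⇑s = z := by ext x; simp [hs]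
    have htt : (z ∘ ⇑t) ∘ ⇑t = z := by ext x; simp [ht]
    have hsts : (((z ∘ ⇑s) ∘ ⇑t) ∘ ⇑s) = (((z ∘ ⇑t) ∘ ⇑s) ∘ ⇑t) := by
      ext x
      show z ((s * t * s) x) = z ((t * s * t) x)
      rw [hperm]
    have es2 : s j2 = j2 := Equiv.swap_apply_of_ne_of_ne h02.symm h12.symm
    have et0 : t j0 = j0 := Equiv.swap_apply_of_ne_of_ne h01 h02
    have es0 : s j0 = j1 := Equiv.swap_apply_left j0 j1
    have es1 : s j1 = j0 := Equiv.swap_apply_right j0 j1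
    have et1 : t j1 = j2 := Equiv.swap_apply_left j1 j2
    have et2 : t j2 = j1 := Equiv.swap_apply_right j1 j2
    simp only [Gadj, Gop, Kex, ← hj0, ← hj1, ← hj2, ← hs, ← ht]
    rw [hss, htt, hsts]
    simp only [Function.comp_apply, es0, es1, es2, et0, et1, et2]
    have d01 : z j0 - z j1 ≠ 0 := sub_ne_zero.2 (fun h => h01 (hz h))
    have d02 : z j0 - z j2 ≠ 0 := sub_ne_zero.2 (fun h => h02 (hz h))
    have d12 : z j1 - z j2 ≠ 0 := sub_ne_zero.2 (fun h => h12 (hz h))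
    have d10 : z j1 - z j0 ≠ 0 := sub_ne_zero.2 (fun h => h01 (hz h.symm))
    have d21 : z j2 - z j1 ≠ 0 := sub_ne_zero.2 (fun h => h12 (hz h.symm))
    generalize f z = F0, f (z ∘ ⇑s) = F1, f (z ∘ ⇑t) = F2,
      f ((z ∘ ⇑s) ∘ ⇑t) = F3, f ((z ∘ ⇑t) ∘ ⇑s) = F4,
      f (((z ∘ ⇑t) ∘ ⇑s) ∘ ⇑t) = F5
    generalize z j0 = a, z j1 = b, z j2 = c at d01 d02 d12 d10 d21 ⊢
    -- from here on: a scalar identity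
    have hqq : q - q⁻¹ ≠ 0 := sub_ne_zero.2 (fun h => hq2 (by
      rw [sq]; nth_rewrite 2 [h]; exact mul_inv_cancel₀ hq0))
    have hba : (q⁻¹ * b - q * a) / (b - a)
        = q + q⁻¹ - (q⁻¹ * a - q * b) / (a - b) := by
      field_simp
      ring
    have hcb : (q⁻¹ * c - q * b) / (c - b)
        = q + q⁻¹ - (q⁻¹ * b - q * c) / (b - c) := by
      field_simp
      ring
    rw [hba, hcb]
    by_cases hb : b = 0
    · subst hb
      have ha : a ≠ 0 := by simpa using d01
      have hc : c ≠ 0 := by simpa using d21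
      have e1 : (q⁻¹ * a - q * 0) / (a - 0) = q⁻¹ := by
        field_simp
        try ring
      have e3 : (q⁻¹ * 0 - q * c) / (0 - c) = q := by
        field_simp
        try ring
      rw [e1, e3]
      ring
    · have hR : ((q⁻¹ * a - q * b) / (a - b) - q⁻¹) * ((q⁻¹ * b - q * c) / (b - c) - q⁻¹)
            * ((q⁻¹ * a - q * c) / (a - c) - q)
          = ((q⁻¹ * a - q * b) / (a - b) - q) * ((q⁻¹ * b - q * c) / (b - c) - q)
            * ((q⁻¹ * a - q * c) / (a - c) - q⁻¹) := by
        have f1 : (q⁻¹ * a - q * b) / (a - b) - q⁻¹ = (q⁻¹ - q) * b / (a - b) := by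
          field_simp; ring
        have f2 : (q⁻¹ * a - q * b) / (a - b) - q = (q⁻¹ - q) * a / (a - b) := by
          field_simp; ring
        have f3 : (q⁻¹ * b - q * c) / (b - c) - q⁻¹ = (q⁻¹ - q) * c / (b - c) := by
          field_simp; ring
        have f4 : (q⁻¹ * b - q * c) / (b - c) - q = (q⁻¹ - q) * b / (b - c) := by
          field_simp; ring
        have f5 : (q⁻¹ * a - q * c) / (a - c) - q⁻¹ = (q⁻¹ - q) * c / (a - c) := by
          field_simp; ring
        have f6 : (q⁻¹ * a - q * c) / (a - c) - q = (q⁻¹ - q) * a / (a - c) := by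
          field_simp; ring
        rw [f1, f2, f3, f4, f5, f6]
        ring
      have hsum : (q⁻¹ * a - q * b) / (a - b) + (q⁻¹ * b - q * c) / (b - c) - q - q⁻¹
          = ((q⁻¹ - q) * b * (a - c)) / ((a - b) * (b - c)) := by
        field_simp
        ring
      have hqq' : q⁻¹ - q ≠ 0 := fun h => hqq (by rw [← neg_sub] at h; exact neg_eq_zero.mp h)
      have hden : (q - q⁻¹) * ((q⁻¹ * a - q * b) / (a - b)
          + (q⁻¹ * b - q * c) / (b - c) - q - q⁻¹) ≠ 0 := by
        rw [hsum]
        exact mul_ne_zero hqq (div_ne_zero (mul_ne_zero (mul_ne_zero hqq' hb) d02)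
          (mul_ne_zero d01 d12))
      apply mul_left_cancel₀ hden
      linear_combination ((q + q⁻¹) * ((q⁻¹ * b - q * c) / (b - c) * (F0 - F2)
          + (q⁻¹ * a - q * b) / (a - b) * (F1 - F0))
        + ((q⁻¹ * b - q * c) / (b - c)) ^ 2 * (F2 - F0)
        + (q⁻¹ * a - q * b) / (a - b) * ((q⁻¹ * b - q * c) / (b - c)) * (F2 - F1)
        + ((q⁻¹ * a - q * b) / (a - b)) ^ 2 * (F0 - F1)) * hR
end

section
/- Uniqueness of normal form: let n ≤ N, and suppose f_{j₁,…,j_n}(z) are rational functions in z₁,…,z_N, indexed by subsets {j₁ < ⋯ < j_n} ⊆ {1,…,N}, such that the operator L̃ = Σ_{j₁<⋯<j_n} f_{j₁,…,j_n}(z) p^{ϑ_{j₁}}⋯p^{ϑ_{j_n}} annihilates every symmetric polynomial P in z₁,…,z_N, identically as a polynomial identity in the formal parameter p. Then all f_{j₁,…,j_n}(z) = 0. -/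
set_option maxRecDepth 4000


open MvPolynomial

/-- uniqueness of the normal form: if the operator
`L̃ = Σ_{j₁<⋯<j_n} f_{j₁,…,j_n}(z) p^{ϑ_{j₁}} ⋯ p^{ϑ_{j_n}}` (here encoded by its
coefficient functions `f J` indexed by `n`-element subsets `J ⊆ {1,…,N}`, with
`p^{ϑ_j}` the operator rescaling `z_j` to `p z_j`) annihilates every symmetric
polynomial `P` in `z₁,…,z_N`, identically in the parameter `p`, then all the
coefficients `f J` vanish (as rational functions, i.e. at every generic point). -/
theorem normal_form_unique {N : ℕ} (n : ℕ) (hn : n ≤ N)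
    (f : Finset (Fin N) → (Fin N → ℂ) → ℂ)
    (hf : ∀ P : MvPolynomial (Fin N) ℂ,
      (∀ σ : Equiv.Perm (Fin N), rename σ P = P) →
      ∀ (p : ℂ) (z : Fin N → ℂ),
        ∑ J ∈ Finset.univ.filter (fun J : Finset (Fin N) => J.card = n),
          f J z * eval (fun i => if i ∈ J then p * z i else z i) P = 0) :
    ∀ J : Finset (Fin N), J.card = n →
      ∀ z : Fin N → ℂ, Function.Injective z → (∀ i, z i ≠ 0) → f J z = 0 := by
  classical
  intro J₀ hJ₀ z hinj hz0
  -- the symmetric test polynomial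
  set P : MvPolynomial (Fin N) ℂ :=
    ∏ i ∈ J₀, ∏ j : Fin N, (1 - C (z i)⁻¹ * X j) with hP
  have hsym : ∀ σ : Equiv.Perm (Fin N), rename σ P = P := by
    intro σ
    rw [hP, map_prod]
    refine Finset.prod_congr rfl fun i _ => ?_
    rw [map_prod, ← Equiv.prod_comp σ (fun j => 1 - C (z i)⁻¹ * X j)]
    refine Finset.prod_congr rfl fun j _ => ?_
    simp
  -- the identity as a univariate polynomial in p
  set Q : Polynomial ℂ :=
    ∑ J ∈ Finset.univ.filter (fun J : Finset (Fin N) => J.card = n),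
      Polynomial.C (f J z) *
        ∏ i ∈ J₀, ∏ j : Fin N,
          (1 - Polynomial.C (z i)⁻¹ *
            (if j ∈ J then Polynomial.X * Polynomial.C (z j) else Polynomial.C (z j)))
    with hQdef
  have hQ0 : Q = 0 := by
    apply Polynomial.funext
    intro p
    rw [Polynomial.eval_zero, hQdef, Polynomial.eval_finset_sum, ← hf P hsym p z]
    refine Finset.sum_congr rfl fun J _ => ?_
    rw [Polynomial.eval_mul, Polynomial.eval_C, hP]
    congr 1
    rw [Polynomial.eval_prod, map_prod]
    refine Finset.prod_congr rfl fun i _ => ?_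
    rw [Polynomial.eval_prod, map_prod]
    refine Finset.prod_congr rfl fun j _ => ?_
    by_cases hj : j ∈ J <;>
      simp only [hj, if_true, if_false, Polynomial.eval_sub, Polynomial.eval_one,
        Polynomial.eval_mul, Polynomial.eval_C, Polynomial.eval_X,
        map_sub, map_one, map_mul, eval_C, eval_X] <;> ring
  -- split the inner product into the linear part and the constant part
  have hinner : ∀ (J : Finset (Fin N)) (i : Fin N),
      (∏ j : Fin N,
        (1 - Polynomial.C (z i)⁻¹ *
          (if j ∈ J then Polynomial.X * Polynomial.C (z j) else Polynomial.C (z j))))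
      = (∏ j ∈ J, (1 - Polynomial.C (z i)⁻¹ * (Polynomial.X * Polynomial.C (z j)))) *
          Polynomial.C (∏ j ∈ Jᶜ, (1 - (z i)⁻¹ * z j)) := by
    intro J i
    rw [← Finset.prod_mul_prod_compl J]
    congr 1
    · exact Finset.prod_congr rfl fun j hj => by rw [if_pos hj]
    · rw [map_prod]
      refine Finset.prod_congr rfl fun j hj => ?_
      rw [if_neg (by simpa using hj), Polynomial.C_sub, Polynomial.C_mul, Polynomial.C_1]
  -- degree and coefficient facts for the linear factors
  have hdeg1 : ∀ (a b : ℂ),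
      (1 - Polynomial.C a * (Polynomial.X * Polynomial.C b)).natDegree ≤ 1 := by
    intro a b; compute_degree
  have hcoeff1 : ∀ (a b : ℂ),
      (1 - Polynomial.C a * (Polynomial.X * Polynomial.C b)).coeff 1 = -(a * b) := by
    intro a b
    simp [Polynomial.coeff_sub, Polynomial.coeff_one, mul_assoc, ← Polynomial.C_mul,
      mul_comm (Polynomial.X) (Polynomial.C (a*b))]
  -- the linear part of inner i for J of card n
  have hA : ∀ (J : Finset (Fin N)), J.card = n → ∀ i : Fin N,
      (∏ j ∈ J, (1 - Polynomial.C (z i)⁻¹ * (Polynomial.X * Polynomial.C (z j)))).coeff n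
        = ∏ j ∈ J, (-((z i)⁻¹ * z j)) := by
    intro J hJ i
    have := Polynomial.coeff_prod_of_natDegree_le
      (s := J) (fun j => 1 - Polynomial.C (z i)⁻¹ * (Polynomial.X * Polynomial.C (z j))) 1
      (fun j _ => hdeg1 _ _)
    rw [hJ, mul_one] at this
    rw [this]
    exact Finset.prod_congr rfl fun j _ => hcoeff1 _ _
  have hdegA : ∀ (J : Finset (Fin N)), J.card = n → ∀ i : Fin N,
      (∏ j ∈ J, (1 - Polynomial.C (z i)⁻¹ * (Polynomial.X * Polynomial.C (z j)))).natDegree ≤ n := by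
    intro J hJ i
    refine le_trans (Polynomial.natDegree_prod_le _ _) ?_
    beta_reduce
    refine le_trans (Finset.sum_le_sum (fun j _ => hdeg1 (z i)⁻¹ (z j))) ?_
    rw [Finset.sum_const, smul_eq_mul, mul_one, hJ]
  -- the coefficient of p^(n*n) of each summand
  have hterm : ∀ (J : Finset (Fin N)), J.card = n →
      (∏ i ∈ J₀, ∏ j : Fin N,
        (1 - Polynomial.C (z i)⁻¹ *
          (if j ∈ J then Polynomial.X * Polynomial.C (z j) else Polynomial.C (z j)))).coeff (n * n)
      = ∏ i ∈ J₀, ((∏ j ∈ J, (-((z i)⁻¹ * z j))) * ∏ j ∈ Jᶜ, (1 - (z i)⁻¹ * z j)) := by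
    intro J hJ
    have hbound : ∀ i ∈ J₀,
        (∏ j : Fin N,
          (1 - Polynomial.C (z i)⁻¹ *
            (if j ∈ J then Polynomial.X * Polynomial.C (z j) else Polynomial.C (z j)))).natDegree ≤ n := by
      intro i _
      rw [hinner J i]
      refine le_trans (Polynomial.natDegree_mul_le) ?_
      rw [Polynomial.natDegree_C, add_zero]
      exact hdegA J hJ i
    have := Polynomial.coeff_prod_of_natDegree_le
      (s := J₀) (fun i => ∏ j : Fin N,
        (1 - Polynomial.C (z i)⁻¹ *
          (if j ∈ J then Polynomial.X * Polynomial.C (z j) else Polynomial.C (z j)))) n hbound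
    rw [hJ₀] at this
    beta_reduce at this
    rw [this]
    refine Finset.prod_congr rfl fun i _ => ?_
    rw [hinner J i, Polynomial.coeff_mul_C, hA J hJ i]
  -- extract the coefficient
  have hcoeff := congrArg (fun q : Polynomial ℂ => q.coeff (n * n)) hQ0
  simp only [hQdef, Polynomial.finset_sum_coeff, Polynomial.coeff_C_mul,
    Polynomial.coeff_zero] at hcoeff
  rw [Finset.sum_congr rfl (fun J hJ => by
    rw [hterm J (Finset.mem_filter.mp hJ).2])] at hcoeff
  -- only the J₀ term survives
  rw [Finset.sum_eq_single_of_mem J₀ (by simp [hJ₀]) ?_] at hcoeff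
  · -- nonvanishing of the J₀ term
    have hne : (∏ i ∈ J₀, ((∏ j ∈ J₀, (-((z i)⁻¹ * z j))) * ∏ j ∈ J₀ᶜ, (1 - (z i)⁻¹ * z j))) ≠ 0 := by
      refine Finset.prod_ne_zero_iff.mpr fun i hi => ?_
      refine mul_ne_zero ?_ ?_
      · refine Finset.prod_ne_zero_iff.mpr fun j _ => ?_
        simp [hz0 i, hz0 j]
      · refine Finset.prod_ne_zero_iff.mpr fun j hj => ?_
        have hij : i ≠ j := fun h => (Finset.mem_compl.mp hj) (h ▸ hi)
        intro h
        have h1 : (z i)⁻¹ * z j = 1 := by linear_combination -h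
        rw [inv_mul_eq_one₀ (hz0 i)] at h1
        exact hij (hinj h1)
    exact (mul_eq_zero.mp hcoeff).resolve_right hne
  · -- all other terms vanish
    intro J hJmem hJne
    obtain ⟨i₀, hi₀J₀, hi₀J⟩ := Finset.not_subset.mp
      (fun hsub => hJne (Finset.eq_of_subset_of_card_le hsub
        (by rw [(Finset.mem_filter.mp hJmem).2, hJ₀])).symm)
    apply mul_eq_zero_of_right
    refine Finset.prod_eq_zero hi₀J₀ ?_
    apply mul_eq_zero_of_right
    refine Finset.prod_eq_zero (Finset.mem_compl.mpr hi₀J) ?_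
    simp [inv_mul_cancel₀ (hz0 i₀)]
end

section
/- Distinctness of spectral data: let q be a complex number transcendental over ℚ with 0 < |q| < 1. For N ∈ ℤ≥0 and a partition λ = (λ₁ ≥ ⋯ ≥ λ_N ≥ 0), set d_k = λ_k + (N−k)/2 and define E(λ,N) = Σ_{k=1}^N q^{−4 d_k} − (N/2)(1 + q²). Then the map (λ, N) ↦ E(λ,N) is injective on the set of pairs (N, λ) with λ a partition of length ≤ N. -/
open Polynomial

/-- The eigenvalue `E(λ,N) = Σ_{k=1}^N q^{−4 d_k} − (N/2)(1 + q²)` with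
`d_k = λ_k + (N − k)/2` (so `−4 d_k = −4 λ_k − 2(N − k)`; 0-indexed below). -/
noncomputable def specE (q : ℂ) (N : ℕ) (lam : Fin N → ℕ) : ℂ :=
  (∑ k : Fin N, q ^ (-(4 : ℤ) * lam k - 2 * ((N : ℤ) - 1 - (k : ℕ)))) -
    (N / 2 : ℂ) * (1 + q ^ 2)

/-- Auxiliary polynomial whose evaluation at `q` equals `q^M * specE q N l`. -/
noncomputable def specP (M N : ℕ) (l : Fin N → ℕ) : Polynomial ℚ :=
  (∑ k : Fin N, Polynomial.X ^ (M - (4 * l k + 2 * (N - 1 - (k : ℕ))))) -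
    Polynomial.C ((N : ℚ) / 2) * (Polynomial.X ^ M + Polynomial.X ^ (M + 2))

lemma specP_aeval (q : ℂ) (hq0 : q ≠ 0) (M N : ℕ) (l : Fin N → ℕ)
    (hl : ∀ k : Fin N, 4 * l k + 2 * (N - 1 - (k : ℕ)) ≤ M) :
    (Polynomial.aeval q) (specP M N l) = specE q N l * q ^ M := by
  simp only [specP, map_sub, map_sum, map_pow, map_mul, map_add, aeval_X, aeval_C]
  rw [specE, sub_mul, Finset.sum_mul]
  congr 1
  · refine Finset.sum_congr rfl fun k _ => ?_
    rw [← zpow_natCast q M, ← zpow_add₀ hq0, ← zpow_natCast q (M - _)]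
    congr 1
    have hk := k.isLt
    have hkM := hl k
    omega
  · have : (algebraMap ℚ ℂ) ((N : ℚ) / 2) = (N : ℂ) / 2 := by
      push_cast
      simp
    rw [this]
    ring

lemma specP_coeff_top (M N : ℕ) (l : Fin N → ℕ)
    (hl : ∀ k : Fin N, 4 * l k + 2 * (N - 1 - (k : ℕ)) ≤ M) :
    (specP M N l).coeff (M + 2) = -((N : ℚ) / 2) := by
  unfold specP
  rw [Polynomial.coeff_sub, Polynomial.finset_sum_coeff, Finset.sum_eq_zero,
    Polynomial.coeff_C_mul, Polynomial.coeff_add, Polynomial.coeff_X_pow,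
    Polynomial.coeff_X_pow, if_neg (by omega), if_pos rfl]
  · ring
  · intro k _
    have := hl k
    rw [Polynomial.coeff_X_pow, if_neg (by omega)]

lemma n_strictMono (M N : ℕ) (l : Fin N → ℕ) (hanti : Antitone l)
    (hl : ∀ k : Fin N, 4 * l k + 2 * (N - 1 - (k : ℕ)) ≤ M) :
    StrictMono (fun k : Fin N => M - (4 * l k + 2 * (N - 1 - (k : ℕ)))) := by
  intro i j hij
  have h1 : l j ≤ l i := hanti hij.le
  have h1' := h1
  have h2 : (i : ℕ) < (j : ℕ) := hij
  have h3 := j.isLt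
  have h4 := hl i
  have h5 := hl j
  simp only
  omega

lemma sum_indicator (N : ℕ) (n : Fin N → ℕ) (hinj : Function.Injective n) (d : ℕ) :
    (∑ x : Fin N, if d = n x then (1 : ℚ) else 0)
      = if d ∈ Finset.image n Finset.univ then 1 else 0 := by
  rw [← Finset.sum_image (f := fun x => if d = x then (1 : ℚ) else 0) (g := n)
    (fun a _ b _ h => hinj h)]
  exact Finset.sum_ite_eq _ _ _

/-- distinctness of spectral data: for `q` transcendental over `ℚ`
with `0 < |q| < 1`, the map `(λ, N) ↦ E(λ,N)` is injective on pairs `(N, λ)`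
with `λ` a partition of length at most `N`. -/
theorem specE_injective (q : ℂ) (hq : Transcendental ℚ q)
    (h0 : 0 < ‖q‖) (h1 : ‖q‖ < 1)
    (N₁ N₂ : ℕ) (l₁ : Fin N₁ → ℕ) (l₂ : Fin N₂ → ℕ)
    (h₁ : Antitone l₁) (h₂ : Antitone l₂)
    (hE : specE q N₁ l₁ = specE q N₂ l₂) :
    ∃ h : N₁ = N₂, ∀ k : Fin N₁, l₁ k = l₂ (Fin.cast h k) := by
  have hq0 : q ≠ 0 := by
    intro h
    rw [h] at h0
    simp at h0
  set M : ℕ := 4 * (∑ k, l₁ k) + 4 * (∑ k, l₂ k) + 2 * N₁ + 2 * N₂ with hM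
  have hl₁ : ∀ k : Fin N₁, 4 * l₁ k + 2 * (N₁ - 1 - (k : ℕ)) ≤ M := by
    intro k
    have h : l₁ k ≤ ∑ j, l₁ j :=
      Finset.single_le_sum (fun _ _ => Nat.zero_le _) (Finset.mem_univ k)
    omega
  have hl₂ : ∀ k : Fin N₂, 4 * l₂ k + 2 * (N₂ - 1 - (k : ℕ)) ≤ M := by
    intro k
    have h : l₂ k ≤ ∑ j, l₂ j :=
      Finset.single_le_sum (fun _ _ => Nat.zero_le _) (Finset.mem_univ k)
    omega
  -- equality of polynomials
  have hP : specP M N₁ l₁ = specP M N₂ l₂ := by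
    by_contra hne
    refine hq ⟨specP M N₁ l₁ - specP M N₂ l₂, sub_ne_zero.mpr hne, ?_⟩
    rw [map_sub, specP_aeval q hq0 M N₁ l₁ hl₁, specP_aeval q hq0 M N₂ l₂ hl₂, hE, sub_self]
  -- equality of N
  have hN : N₁ = N₂ := by
    have hc := congrArg (fun p => Polynomial.coeff p (M + 2)) hP
    simp only [specP_coeff_top M N₁ l₁ hl₁, specP_coeff_top M N₂ l₂ hl₂] at hc
    have : (N₁ : ℚ) = N₂ := by linarith
    exact_mod_cast this
  subst hN
  refine ⟨rfl, fun k => ?_⟩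
  -- equality of the exponent sums
  have hS : (∑ k : Fin N₁, (Polynomial.X : ℚ[X]) ^ (M - (4 * l₁ k + 2 * (N₁ - 1 - (k : ℕ)))))
      = ∑ k : Fin N₁, (Polynomial.X : ℚ[X]) ^ (M - (4 * l₂ k + 2 * (N₁ - 1 - (k : ℕ)))) := by
    have h := hP
    unfold specP at h
    exact sub_left_injective h
  have hm₁ : StrictMono (fun k : Fin N₁ => M - (4 * l₁ k + 2 * (N₁ - 1 - (k : ℕ)))) :=
    n_strictMono M N₁ l₁ h₁ hl₁
  have hm₂ : StrictMono (fun k : Fin N₁ => M - (4 * l₂ k + 2 * (N₁ - 1 - (k : ℕ)))) :=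
    n_strictMono M N₁ l₂ h₂ hl₂
  -- images are equal
  have himg : Finset.image (fun k : Fin N₁ => M - (4 * l₁ k + 2 * (N₁ - 1 - (k : ℕ))))
      Finset.univ
      = Finset.image (fun k : Fin N₁ => M - (4 * l₂ k + 2 * (N₁ - 1 - (k : ℕ))))
      Finset.univ := by
    ext d
    have hc := congrArg (fun p => Polynomial.coeff p d) hS
    simp only [Polynomial.finset_sum_coeff, Polynomial.coeff_X_pow] at hc
    rw [sum_indicator N₁ _ hm₁.injective d, sum_indicator N₁ _ hm₂.injective d] at hc
    by_cases hd1 : d ∈ Finset.image (fun k : Fin N₁ =>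
        M - (4 * l₁ k + 2 * (N₁ - 1 - (k : ℕ)))) Finset.univ <;>
      by_cases hd2 : d ∈ Finset.image (fun k : Fin N₁ =>
        M - (4 * l₂ k + 2 * (N₁ - 1 - (k : ℕ)))) Finset.univ <;>
      simp [hd1, hd2] at hc ⊢
  -- hence equal as strictly monotone enumerations
  have hcard : (Finset.image (fun k : Fin N₁ => M - (4 * l₁ k + 2 * (N₁ - 1 - (k : ℕ))))
      Finset.univ).card = N₁ := by
    rw [Finset.card_image_of_injective _ hm₁.injective, Finset.card_univ, Fintype.card_fin]
  have e₁ := Finset.orderEmbOfFin_unique hcard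
    (fun x => Finset.mem_image_of_mem _ (Finset.mem_univ x)) hm₁
  have e₂ := Finset.orderEmbOfFin_unique hcard
    (fun x => by rw [himg]; exact Finset.mem_image_of_mem _ (Finset.mem_univ x)) hm₂
  have hn : M - (4 * l₁ k + 2 * (N₁ - 1 - (k : ℕ)))
      = M - (4 * l₂ k + 2 * (N₁ - 1 - (k : ℕ))) := by
    have := congrFun (e₁.trans e₂.symm) k
    simpa using this
  have h4 := hl₁ k
  have h5 := hl₂ k
  simp only [Fin.cast_refl, id]
  omega
end

section
/- Refined character identity with sl₂-weight: for i ∈ {0,1}, Σ_{N ≡ i (mod 2), ℓ(λ) ≤ N} q^{N²/4 − i/4 + |λ|} ∏_{j=1}^m χ_{n_j}(z) = Σ_{n⁺, n⁻ ≥ 0, n⁺+n⁻ ≡ i (mod 2)} z^{n⁺ − n⁻} q^{(n⁺+n⁻)²/4 − i/4} / ((q;q)_{n⁺}(q;q)_{n⁻}), where χ_n(z) = (z^{n+1} − z^{−(n+1)})/(z − z^{−1}) = Σ_{a+b=n} z^{a−b}, as formal power series in q^{1/4} with coefficients in ℤ[z, z⁻¹]. -/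
open PowerSeries

/-- The `sl₂`-character `χ_n(z) = (z^{n+1} − z^{−(n+1)})/(z − z⁻¹) = Σ_{a+b=n} z^{a−b}`,
as an element of `ℚ(z)` (its coefficients lie in `ℤ[z,z⁻¹]`). -/
noncomputable def chiSl2 (n : ℕ) : RatFunc ℚ :=
  ∑ a ∈ Finset.range (n + 1), (RatFunc.X : RatFunc ℚ) ^ (2 * (a : ℤ) - n)

/-- The fermionic (spinon) side of the refined level-1 character formula with
`sl₂`-weights, parity `i`, after multiplying by `q^{i/4}` and substituting `q ↦ q⁴`,
truncated to the terms that can contribute in degree `≤ M`: partitions `λ` of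
length `≤ N` are encoded by antitone `μ : Fin N → Fin (M+1)`, and
`∏_j χ_{n_j}(z)` is the product over the distinct values `v` of `μ` of
`χ_{mult(v)}(z)`. -/
noncomputable def fermionicSideZ (i M : ℕ) : PowerSeries (RatFunc ℚ) :=
  ∑ N ∈ Finset.range (M + 1),
    if N % 2 = i then
      ∑ μ : Fin N → Fin (M + 1),
        (if Antitone (fun l => (μ l : ℕ)) then
          (PowerSeries.C (R := RatFunc ℚ) (∏ v ∈ Finset.univ.image μ,
              chiSl2 ((Finset.univ.filter (fun l => μ l = v)).card))) *
            (PowerSeries.X : PowerSeries (RatFunc ℚ)) ^ (N ^ 2 + 4 * ∑ l, (μ l : ℕ))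
        else 0)
    else 0

/-- The sum `Σ z^{n⁺−n⁻} q^{(n⁺+n⁻)²}/((q⁴;q⁴)_{n⁺}(q⁴;q⁴)_{n⁻})` (after `q ↦ q⁴`
and stripping `q^{-i/4}`), truncated to `n⁺, n⁻ ≤ M`. -/
noncomputable def spinonSideZ (i M : ℕ) : PowerSeries (RatFunc ℚ) :=
  ∑ np ∈ Finset.range (M + 1), ∑ nm ∈ Finset.range (M + 1),
    if (np + nm) % 2 = i then
      (PowerSeries.C (R := RatFunc ℚ) ((RatFunc.X : RatFunc ℚ) ^ ((np : ℤ) - nm))) *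
        (PowerSeries.X : PowerSeries (RatFunc ℚ)) ^ ((np + nm) ^ 2) *
        (∏ k ∈ Finset.Icc 1 np,
          (1 - (PowerSeries.X : PowerSeries (RatFunc ℚ)) ^ (4 * k)))⁻¹ *
        (∏ k ∈ Finset.Icc 1 nm,
          (1 - (PowerSeries.X : PowerSeries (RatFunc ℚ)) ^ (4 * k)))⁻¹
    else 0


open Finset

noncomputable section AuxRCI2


abbrev KK := RatFunc ℚ

/-- multiplicity vectors with values `≤ M` -/
def Vset (M : ℕ) : Finset (Fin (M+1) → ℕ) := Fintype.piFinset fun _ => Finset.range (M+1)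

def sz {M : ℕ} (a : Fin (M+1) → ℕ) : ℕ := ∑ v : Fin (M+1), a v
def wt {M : ℕ} (a : Fin (M+1) → ℕ) : ℕ := ∑ v : Fin (M+1), (v : ℕ) * a v

def Pprod (n : ℕ) : PowerSeries KK := ∏ k ∈ Finset.Icc 1 n, (1 - (X : PowerSeries KK) ^ (4*k))
def Fser (n : ℕ) : PowerSeries KK := (Pprod n)⁻¹

def gcount (M n d : ℕ) : ℕ := ((Vset M).filter (fun a => sz a = n ∧ 4 * wt a = d)).card

lemma constantCoeff_Pprod (n : ℕ) : constantCoeff (Pprod n) = 1 := by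
  rw [Pprod, map_prod]
  refine Finset.prod_eq_one fun k hk => ?_
  rw [map_sub, map_pow, constantCoeff_one, constantCoeff_X]
  rw [Finset.mem_Icc] at hk
  rw [zero_pow (Nat.mul_ne_zero (by norm_num) (by omega)), sub_zero]

lemma Pprod_ne_zero (n : ℕ) : Pprod n ≠ 0 := by
  intro h
  have h2 := constantCoeff_Pprod n
  rw [h, map_zero] at h2
  exact (one_ne_zero (α := KK)) h2.symm

lemma Fser_mul (n : ℕ) : Fser n * Pprod n = 1 :=
  PowerSeries.inv_mul_cancel _ (by rw [constantCoeff_Pprod]; exact one_ne_zero)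

lemma Fser_succ (n : ℕ) :
    Fser (n+1) = Fser n + X ^ (4*(n+1)) * Fser (n+1) := by
  have h2 : Pprod (n+1) = Pprod n * (1 - X ^ (4*(n+1))) := by
    rw [Pprod, Pprod, Finset.prod_Icc_succ_top (by omega)]
  have h1 := Fser_mul (n+1)
  rw [h2] at h1
  have h3 : (Fser (n+1) * (1 - X ^ (4*(n+1)))) * Pprod n = Fser n * Pprod n := by
    rw [Fser_mul n]; linear_combination h1
  have h4 := mul_right_cancel₀ (Pprod_ne_zero n) h3
  linear_combination h4

lemma coeff_Fser_succ (n d : ℕ) :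
    coeff (R := KK) d (Fser (n+1)) =
      coeff (R := KK) d (Fser n) + if 4*(n+1) ≤ d then coeff (R := KK) (d - 4*(n+1)) (Fser (n+1)) else 0 := by
  conv_lhs => rw [Fser_succ, map_add, mul_comm (X ^ (4*(n+1))) (Fser (n+1)),
    coeff_mul_X_pow']

lemma gcount_zero (M d : ℕ) : gcount M 0 d = if d = 0 then 1 else 0 := by
  rcases eq_or_ne d 0 with rfl | hd
  · rw [gcount, if_pos rfl]
    have : (Vset M).filter (fun a => sz a = 0 ∧ 4 * wt a = 0) = {fun _ => 0} := by
      ext a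
      simp only [Finset.mem_filter, Finset.mem_singleton]
      constructor
      · rintro ⟨-, h0, -⟩
        funext v
        exact Finset.sum_eq_zero_iff.mp h0 v (Finset.mem_univ v)
      · rintro rfl
        refine ⟨?_, ?_, ?_⟩
        · exact Fintype.mem_piFinset.mpr fun v => Finset.mem_range.mpr (by omega)
        · simp [sz]
        · simp [wt]
    rw [this, Finset.card_singleton]
  · rw [gcount, if_neg hd]
    convert Finset.card_empty
    ext a
    simp only [Finset.mem_filter, Finset.notMem_empty, iff_false, not_and]
    rintro - h0
    have ha : a = fun _ => 0 := by
      funext v; exact Finset.sum_eq_zero_iff.mp h0 v (Finset.mem_univ v)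
    subst ha
    simp [wt, Ne.symm hd, hd]

lemma sz_eq {M : ℕ} (a : Fin (M+1) → ℕ) : sz a = a 0 + ∑ v : Fin M, a v.succ :=
  Fin.sum_univ_succ a

lemma wt_eq {M : ℕ} (a : Fin (M+1) → ℕ) :
    wt a = ∑ v : Fin M, ((v : ℕ) + 1) * a v.succ := by
  rw [wt, Fin.sum_univ_succ]
  simp

def shiftDown {M : ℕ} (a : Fin (M+1) → ℕ) : Fin (M+1) → ℕ :=
  fun v => if h : (v : ℕ) + 1 < M + 1 then a ⟨v + 1, h⟩ else 0

def shiftUp {M : ℕ} (a : Fin (M+1) → ℕ) : Fin (M+1) → ℕ :=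
  fun v => if _ : 0 < (v : ℕ) then a ⟨(v : ℕ) - 1, by omega⟩ else 0

def bumpDown {M : ℕ} (a : Fin (M+1) → ℕ) : Fin (M+1) → ℕ := Function.update a 0 (a 0 - 1)
def bumpUp {M : ℕ} (a : Fin (M+1) → ℕ) : Fin (M+1) → ℕ := Function.update a 0 (a 0 + 1)

lemma bumpDown_zero {M : ℕ} (a : Fin (M+1) → ℕ) : bumpDown a 0 = a 0 - 1 := by
  simp [bumpDown]

lemma bumpDown_succ {M : ℕ} (a : Fin (M+1) → ℕ) (v : Fin M) :
    bumpDown a v.succ = a v.succ := Function.update_of_ne (Fin.succ_ne_zero v) _ a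

lemma bumpUp_zero {M : ℕ} (a : Fin (M+1) → ℕ) : bumpUp a 0 = a 0 + 1 := by
  simp [bumpUp]

lemma bumpUp_succ {M : ℕ} (a : Fin (M+1) → ℕ) (v : Fin M) :
    bumpUp a v.succ = a v.succ := Function.update_of_ne (Fin.succ_ne_zero v) _ a

lemma apply_eq_zero_or_succ {M : ℕ} (a : Fin (M+1) → ℕ) (v : Fin (M+1)) :
    v = 0 ∨ ∃ w : Fin M, v = w.succ := by
  rcases Nat.eq_zero_or_pos (v : ℕ) with h | h
  · left; ext; simpa using h
  · right
    refine ⟨⟨(v : ℕ) - 1, by omega⟩, ?_⟩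
    ext
    simp [Fin.val_succ]
    omega

lemma sz_bumpDown {M : ℕ} (a : Fin (M+1) → ℕ) : sz (bumpDown a) = (a 0 - 1) + ∑ v : Fin M, a v.succ := by
  rw [sz_eq, bumpDown_zero, Finset.sum_congr rfl fun v _ => bumpDown_succ a v]

lemma wt_bumpDown {M : ℕ} (a : Fin (M+1) → ℕ) : wt (bumpDown a) = wt a := by
  rw [wt_eq, wt_eq a, Finset.sum_congr rfl fun v _ => by rw [bumpDown_succ a v]]

lemma sz_bumpUp {M : ℕ} (a : Fin (M+1) → ℕ) : sz (bumpUp a) = (a 0 + 1) + ∑ v : Fin M, a v.succ := by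
  rw [sz_eq, bumpUp_zero, Finset.sum_congr rfl fun v _ => bumpUp_succ a v]

lemma wt_bumpUp {M : ℕ} (a : Fin (M+1) → ℕ) : wt (bumpUp a) = wt a := by
  rw [wt_eq, wt_eq a, Finset.sum_congr rfl fun v _ => by rw [bumpUp_succ a v]]

lemma shiftDown_castSucc {M : ℕ} (a : Fin (M+1) → ℕ) (v : Fin M) :
    shiftDown a v.castSucc = a v.succ := by
  have h : ((v.castSucc : ℕ)) + 1 < M + 1 := by simpa using v.isLt
  rw [shiftDown, dif_pos h]
  exact congrArg a (by ext; simp)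

lemma shiftDown_last {M : ℕ} (a : Fin (M+1) → ℕ) :
    shiftDown a (Fin.last M) = 0 := by
  rw [shiftDown, dif_neg (by simp)]

lemma sz_shiftDown {M : ℕ} (a : Fin (M+1) → ℕ) :
    a 0 + sz (shiftDown a) = sz a := by
  rw [sz_eq a, sz, Fin.sum_univ_castSucc]
  simp only [shiftDown_castSucc, shiftDown_last, add_zero]

lemma wt_shiftDown {M : ℕ} (a : Fin (M+1) → ℕ) :
    wt a = wt (shiftDown a) + sz (shiftDown a) := by
  rw [wt_eq a, wt, sz, Fin.sum_univ_castSucc, Fin.sum_univ_castSucc]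
  simp only [shiftDown_castSucc, shiftDown_last, mul_zero, add_zero, Fin.coe_castSucc]
  rw [← Finset.sum_add_distrib]
  exact Finset.sum_congr rfl fun v _ => by ring

lemma shiftDown_shiftUp {M : ℕ} (b : Fin (M+1) → ℕ) (hM : b (Fin.last M) = 0) :
    shiftDown (shiftUp b) = b := by
  funext v
  rcases lt_or_ge ((v : ℕ) + 1) (M + 1) with h | h
  · rw [shiftDown, dif_pos h, shiftUp, dif_pos (by simp)]
    exact congrArg b (by ext; simp)
  · have hv : v = Fin.last M := by ext; simpa using (by omega : (v:ℕ) = M)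
    rw [shiftDown, dif_neg (by omega), hv, hM]

lemma shiftUp_shiftDown {M : ℕ} (a : Fin (M+1) → ℕ) (h0 : a 0 = 0) :
    shiftUp (shiftDown a) = a := by
  funext v
  rcases Nat.eq_zero_or_pos (v : ℕ) with h | h
  · rw [shiftUp, dif_neg (by omega)]
    have hv : v = 0 := by ext; simpa using h
    rw [hv, h0]
  · rw [shiftUp, dif_pos h, shiftDown]
    have hlt : ((⟨(v:ℕ)-1, by omega⟩ : Fin (M+1)) : ℕ) + 1 < M + 1 := by
      simp only [Fin.val_mk]; omega
    rw [dif_pos hlt]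
    exact congrArg a (by ext; simp; omega)

lemma mem_Vset {M : ℕ} {a : Fin (M+1) → ℕ} :
    a ∈ Vset M ↔ ∀ v, a v ≤ M := by
  simp [Vset, Fintype.mem_piFinset, Nat.lt_succ_iff]

lemma sz_le_of_mem {M n : ℕ} {a : Fin (M+1) → ℕ} (h : a ∈ Vset M) : True := trivial

lemma apply_le_sz {M : ℕ} (a : Fin (M+1) → ℕ) (v : Fin (M+1)) : a v ≤ sz a :=
  Finset.single_le_sum (f := fun v => a v) (fun _ _ => Nat.zero_le _) (Finset.mem_univ v)

lemma cardA1 (M n d : ℕ) (hd : d ≤ M) (hn : n + 1 ≤ M) :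
    ((Vset M).filter (fun a => (sz a = n+1 ∧ 4 * wt a = d) ∧ ¬ a 0 = 0)).card
      = gcount M n d := by
  rw [gcount]
  apply Finset.card_nbij (fun a => bumpDown a)
  · intro a ha
    simp only [Finset.mem_coe, Finset.mem_filter] at ha ⊢
    obtain ⟨hV, ⟨hsz, hwt⟩, h0⟩ := ha
    refine ⟨mem_Vset.mpr fun v => ?_, ?_, ?_⟩
    · rcases apply_eq_zero_or_succ a v with rfl | ⟨w, rfl⟩
      · rw [bumpDown_zero]
        exact le_trans (Nat.sub_le _ _) (mem_Vset.mp hV 0)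
      · rw [bumpDown_succ]
        exact mem_Vset.mp hV _
    · rw [sz_bumpDown]
      rw [sz_eq] at hsz
      omega
    · rw [wt_bumpDown]
      exact hwt
  · intro a ha b hb hab
    simp only [Finset.coe_filter, Set.mem_setOf_eq, Finset.mem_filter] at ha hb
    simp only at hab
    funext v
    rcases apply_eq_zero_or_succ a v with rfl | ⟨w, rfl⟩
    · have h1 := congrFun hab 0
      rw [bumpDown_zero, bumpDown_zero] at h1
      have ha0 := ha.2.2
      have hb0 := hb.2.2
      omega
    · have h1 := congrFun hab w.succ
      rwa [bumpDown_succ, bumpDown_succ] at h1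
  · intro b hb
    simp only [Finset.coe_filter, Set.mem_setOf_eq, Finset.mem_filter] at hb
    obtain ⟨hV, hsz, hwt⟩ := hb
    have hb0 : b 0 ≤ n := by
      have := apply_le_sz b 0
      omega
    refine ⟨bumpUp b, Finset.mem_coe.mpr (Finset.mem_filter.mpr ⟨?_, ⟨?_, ?_⟩, ?_⟩), ?_⟩
    · refine mem_Vset.mpr fun v => ?_
      rcases apply_eq_zero_or_succ b v with rfl | ⟨w, rfl⟩
      · rw [bumpUp_zero]; omega
      · rw [bumpUp_succ]; exact mem_Vset.mp hV _
    · rw [sz_bumpUp]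
      rw [sz_eq] at hsz
      omega
    · rw [wt_bumpUp]; exact hwt
    · rw [bumpUp_zero]; omega
    · funext v
      show bumpDown (bumpUp b) v = b v
      rcases apply_eq_zero_or_succ b v with rfl | ⟨w, rfl⟩
      · rw [bumpDown_zero, bumpUp_zero]; omega
      · rw [bumpDown_succ, bumpUp_succ]

lemma cardA0 (M n d : ℕ) (hd : d ≤ M) :
    ((Vset M).filter (fun a => (sz a = n+1 ∧ 4 * wt a = d) ∧ a 0 = 0)).card
      = if 4*(n+1) ≤ d then gcount M (n+1) (d - 4*(n+1)) else 0 := by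
  split_ifs with hc
  · rw [gcount]
    apply Finset.card_nbij (fun a => shiftDown a)
    · intro a ha
      simp only [Finset.mem_coe, Finset.mem_filter] at ha ⊢
      obtain ⟨hV, ⟨hsz, hwt⟩, h0⟩ := ha
      have h1 := sz_shiftDown a
      have h2 := wt_shiftDown a
      refine ⟨mem_Vset.mpr fun v => ?_, by omega, by omega⟩
      rw [shiftDown]
      split_ifs with h
      · exact mem_Vset.mp hV _
      · omega
    · intro a ha b hb hab
      simp only [Finset.coe_filter, Set.mem_setOf_eq, Finset.mem_filter] at ha hb
      simp only at hab
      have := congrArg shiftUp hab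
      rwa [shiftUp_shiftDown a ha.2.2, shiftUp_shiftDown b hb.2.2] at this
    · intro b hb
      simp only [Finset.coe_filter, Set.mem_setOf_eq, Finset.mem_filter] at hb
      obtain ⟨hV, hsz, hwt⟩ := hb
      have hM4 : 4 ≤ M := by omega
      have hbM : b (Fin.last M) = 0 := by
        by_contra hne
        have h1 : 1 ≤ b (Fin.last M) := Nat.one_le_iff_ne_zero.mpr hne
        have h2 : (Fin.last M : ℕ) * b (Fin.last M) ≤ wt b :=
          Finset.single_le_sum (f := fun v : Fin (M+1) => (v : ℕ) * b v)
            (fun _ _ => Nat.zero_le _) (Finset.mem_univ _)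
        simp only [Fin.val_last] at h2
        have hMle : M ≤ M * b (Fin.last M) := Nat.le_mul_of_pos_right M (by omega)
        omega
      have hsd := shiftDown_shiftUp b hbM
      have h0 : shiftUp b 0 = 0 := by rw [shiftUp, dif_neg (by simp)]
      have h1 := sz_shiftDown (shiftUp b)
      have h2 := wt_shiftDown (shiftUp b)
      rw [hsd] at h1 h2
      refine ⟨shiftUp b, Finset.mem_coe.mpr (Finset.mem_filter.mpr
        ⟨mem_Vset.mpr fun v => ?_, ⟨by omega, by omega⟩, h0⟩), hsd⟩
      rw [shiftUp]
      split_ifs with h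
      · exact mem_Vset.mp hV _
      · omega
  · rw [Finset.card_eq_zero]
    ext a
    simp only [Finset.mem_filter, Finset.notMem_empty, iff_false, not_and]
    intro hV hsw h0
    obtain ⟨hsz, hwt⟩ := hsw
    rw [sz_eq] at hsz
    rw [wt_eq] at hwt
    have hle : ∑ v : Fin M, a v.succ ≤ ∑ v : Fin M, ((v:ℕ)+1) * a v.succ :=
      Finset.sum_le_sum fun v _ => Nat.le_mul_of_pos_left _ (by omega)
    omega

lemma gcount_succ (M n d : ℕ) (hd : d ≤ M) (hn : n + 1 ≤ M) :
    gcount M (n+1) d = gcount M n d +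
      if 4*(n+1) ≤ d then gcount M (n+1) (d - 4*(n+1)) else 0 := by
  classical
  rw [gcount,
    ← Finset.card_filter_add_card_filter_not (p := fun a => ¬ a 0 = 0),
    Finset.filter_filter, Finset.filter_filter]
  simp only [not_not]
  rw [cardA1 M n d hd hn, cardA0 M n d hd]

lemma coeff_Fser (M : ℕ) : ∀ n d : ℕ, n ≤ M → d ≤ M →
    coeff (R := KK) d (Fser n) = (gcount M n d : KK) := by
  suffices H : ∀ t n d, n + d = t → n ≤ M → d ≤ M →
      coeff (R := KK) d (Fser n) = (gcount M n d : KK) by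
    exact fun n d hn hd => H (n + d) n d rfl hn hd
  intro t
  induction t using Nat.strong_induction_on with
  | _ t IH =>
    rintro n d rfl hnM hdM
    match n with
    | 0 =>
      rw [gcount_zero]
      have hP : Pprod 0 = 1 := by
        rw [Pprod, show Finset.Icc 1 0 = (∅ : Finset ℕ) by rfl, Finset.prod_empty]
      have hF : Fser 0 = 1 := by
        have := Fser_mul 0
        rwa [hP, mul_one] at this
      rw [hF, coeff_one]
      split_ifs with h <;> simp
    | Nat.succ n =>
      rw [coeff_Fser_succ, IH (n + d) (by omega) n d rfl (by omega) hdM]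
      rw [gcount_succ M n d hdM (by omega)]
      push_cast
      congr 1
      split_ifs with h
      · exact IH (n + 1 + (d - 4*(n+1))) (by omega) (n+1) (d - 4*(n+1)) rfl hnM (by omega)
      · simp
def cnt {M N : ℕ} (μ : Fin N → Fin (M+1)) : Fin (M+1) → ℕ :=
  fun v => (Finset.univ.filter (fun l => μ l = v)).card

def Tc {M : ℕ} (c : Fin (M+1) → ℕ) (v : ℕ) : ℕ :=
  ∑ w ∈ Finset.univ.filter (fun w : Fin (M+1) => v ≤ (w : ℕ)), c w

lemma Tc_zero {M : ℕ} (c : Fin (M+1) → ℕ) : Tc c 0 = sz c := by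
  rw [Tc, sz, Finset.filter_true_of_mem fun w _ => Nat.zero_le _]

lemma Tc_anti {M : ℕ} (c : Fin (M+1) → ℕ) {v v' : ℕ} (h : v ≤ v') :
    Tc c v' ≤ Tc c v := by
  apply Finset.sum_le_sum_of_subset
  intro w hw
  simp only [Finset.mem_filter, Finset.mem_univ, true_and] at hw ⊢
  omega

lemma Tc_big {M : ℕ} (c : Fin (M+1) → ℕ) {v : ℕ} (h : M < v) : Tc c v = 0 := by
  rw [Tc, Finset.sum_eq_zero]
  intro w hw
  simp only [Finset.mem_filter] at hw
  exact absurd hw.2 (by have := w.isLt; omega)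

lemma Tc_step {M : ℕ} (c : Fin (M+1) → ℕ) (v : Fin (M+1)) :
    Tc c v = c v + Tc c ((v : ℕ) + 1) := by
  rw [Tc, Tc]
  have hsplit : Finset.univ.filter (fun w : Fin (M+1) => (v : ℕ) ≤ (w : ℕ))
      = insert v (Finset.univ.filter (fun w : Fin (M+1) => (v : ℕ) + 1 ≤ (w : ℕ))) := by
    ext w
    simp only [Finset.mem_filter, Finset.mem_insert, Finset.mem_univ, true_and]
    constructor
    · intro h
      rcases eq_or_lt_of_le h with h' | h'
      · left; ext; omega
      · right; omega
    · rintro (rfl | h)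
      · omega
      · omega
  rw [hsplit, Finset.sum_insert (by simp)]

lemma cardFinLt (N t : ℕ) (h : t ≤ N) :
    (Finset.univ.filter fun l : Fin N => (l : ℕ) < t).card = t := by
  conv_rhs => rw [← Finset.card_range t]
  refine Finset.card_nbij (fun l => (l : ℕ)) ?_ ?_ ?_
  · intro l hl
    simp only [Finset.mem_coe, Finset.mem_filter] at hl
    exact Finset.mem_range.mpr hl.2
  · intro a _ b _ hab
    exact Fin.val_injective hab
  · intro x hx
    simp only [Finset.coe_range, Set.mem_Iio] at hx
    refine ⟨⟨x, by omega⟩, ?_, rfl⟩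
    simp only [Finset.coe_filter, Set.mem_setOf_eq, Finset.mem_univ, true_and]
    exact hx
lemma Tcnt {M N : ℕ} (μ : Fin N → Fin (M+1)) (v : ℕ) :
    Tc (cnt μ) v = (Finset.univ.filter (fun l => v ≤ (μ l : ℕ))).card := by
  rw [Tc]
  rw [Finset.card_eq_sum_card_fiberwise
    (f := μ) (t := Finset.univ.filter (fun w : Fin (M+1) => v ≤ (w : ℕ)))
    (fun l hl => by simp only [Finset.mem_coe, Finset.mem_filter] at hl ⊢; exact ⟨Finset.mem_univ _, hl.2⟩)]
  refine Finset.sum_congr rfl fun w hw => ?_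
  simp only [Finset.mem_filter] at hw
  rw [Finset.filter_filter, cnt]
  congr 1
  apply Finset.filter_congr
  intro l _
  constructor
  · intro h2
    first
    | exact h2.2
    | exact ⟨by rw [h2]; exact hw.2, h2⟩
  · intro h2
    first
    | exact h2.2
    | exact ⟨by rw [h2]; exact hw.2, h2⟩

lemma antitone_le_iff {M N : ℕ} {μ : Fin N → Fin (M+1)}
    (hμ : Antitone fun l => (μ l : ℕ)) (v : ℕ) (l : Fin N) :
    v ≤ (μ l : ℕ) ↔ (l : ℕ) < Tc (cnt μ) v := by
  rw [Tcnt]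
  constructor
  · intro h
    have hsub : (Finset.univ.filter fun l' : Fin N => (l' : ℕ) < (l : ℕ) + 1)
        ⊆ Finset.univ.filter (fun l' => v ≤ (μ l' : ℕ)) := by
      intro l' hl'
      simp only [Finset.mem_filter, Finset.mem_univ, true_and] at hl' ⊢
      have hll : l' ≤ l := by rw [Fin.le_def]; omega
      exact le_trans h (hμ hll)
    have hcard := Finset.card_le_card hsub
    rw [cardFinLt N ((l : ℕ) + 1) l.isLt] at hcard
    omega
  · intro h
    by_contra hv
    push_neg at hv
    have hsub : (Finset.univ.filter (fun l' => v ≤ (μ l' : ℕ)))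
        ⊆ (Finset.univ.filter fun l' : Fin N => (l' : ℕ) < (l : ℕ)) := by
      intro l' hl'
      simp only [Finset.mem_filter, Finset.mem_univ, true_and] at hl' ⊢
      by_contra hc
      push_neg at hc
      have hll : l ≤ l' := by rw [Fin.le_def]; omega
      have h2 : ((μ l' : Fin (M+1)) : ℕ) ≤ ((μ l : Fin (M+1)) : ℕ) := hμ hll
      omega
    have hcard := Finset.card_le_card hsub
    rw [cardFinLt N (l : ℕ) (le_of_lt l.isLt)] at hcard
    omega

lemma cnt_inj {M N : ℕ} {μ μ' : Fin N → Fin (M+1)}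
    (hμ : Antitone fun l => (μ l : ℕ)) (hμ' : Antitone fun l => (μ' l : ℕ))
    (h : cnt μ = cnt μ') : μ = μ' := by
  funext l
  have e2 : ((μ l : Fin (M+1)) : ℕ) ≤ ((μ' l : Fin (M+1)) : ℕ) := by
    have h1 := (antitone_le_iff hμ ((μ l : Fin (M+1)) : ℕ) l).mp (le_refl _)
    rw [h] at h1
    exact (antitone_le_iff hμ' _ l).mpr h1
  have e1 : ((μ' l : Fin (M+1)) : ℕ) ≤ ((μ l : Fin (M+1)) : ℕ) := by
    have h1 := (antitone_le_iff hμ' ((μ' l : Fin (M+1)) : ℕ) l).mp (le_refl _)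
    rw [← h] at h1
    exact (antitone_le_iff hμ _ l).mpr h1
  ext
  omega

def toAnti {M : ℕ} (c : Fin (M+1) → ℕ) {N : ℕ} : Fin N → Fin (M+1) :=
  fun l => ⟨((Finset.range (M+1)).filter (fun v => (l : ℕ) < Tc c v)).card - 1, by
    have h1 := Finset.card_filter_le (Finset.range (M+1)) (fun v => (l : ℕ) < Tc c v)
    rw [Finset.card_range] at h1
    omega⟩

lemma charac {M : ℕ} (c : Fin (M+1) → ℕ) (l v : ℕ) (hv : v ≤ M) :
    l < Tc c v ↔ v < ((Finset.range (M+1)).filter (fun v => l < Tc c v)).card := by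
  constructor
  · intro h
    have hsub : Finset.range (v + 1) ⊆ (Finset.range (M+1)).filter (fun v => l < Tc c v) := by
      intro w hw
      rw [Finset.mem_range] at hw
      rw [Finset.mem_filter, Finset.mem_range]
      exact ⟨by omega, lt_of_lt_of_le h (Tc_anti c (by omega))⟩
    have := Finset.card_le_card hsub
    rw [Finset.card_range] at this
    omega
  · intro h
    by_contra hc
    push_neg at hc
    have hsub : (Finset.range (M+1)).filter (fun v => l < Tc c v) ⊆ Finset.range v := by
      intro w hw
      rw [Finset.mem_filter] at hw
      rw [Finset.mem_range]
      by_contra hw2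
      push_neg at hw2
      have := Tc_anti c hw2 (v := v) (v' := w)
      omega
    have := Finset.card_le_card hsub
    rw [Finset.card_range] at this
    omega

lemma le_toAnti_iff {M N : ℕ} {c : Fin (M+1) → ℕ} (h : sz c = N) (l : Fin N) (v : ℕ)
    (hv : v ≤ M) : v ≤ (toAnti c l : ℕ) ↔ (l : ℕ) < Tc c v := by
  have hpos : 1 ≤ ((Finset.range (M+1)).filter (fun v => (l : ℕ) < Tc c v)).card := by
    rw [Nat.one_le_iff_ne_zero, ← Nat.pos_iff_ne_zero, Finset.card_pos]
    refine ⟨0, ?_⟩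
    rw [Finset.mem_filter, Finset.mem_range]
    rw [Tc_zero, h]
    exact ⟨by omega, l.isLt⟩
  rw [charac c (l : ℕ) v hv]
  show v ≤ ((Finset.range (M+1)).filter (fun v => (l : ℕ) < Tc c v)).card - 1 ↔ _
  omega

lemma toAnti_antitone {M N : ℕ} {c : Fin (M+1) → ℕ} :
    Antitone fun l : Fin N => ((toAnti c l : Fin (M+1)) : ℕ) := by
  intro a b hab
  show ((toAnti c b : Fin (M+1)) : ℕ) ≤ (toAnti c a : ℕ)
  have hsub : ((Finset.range (M+1)).filter (fun v => (b : ℕ) < Tc c v))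
      ⊆ ((Finset.range (M+1)).filter (fun v => (a : ℕ) < Tc c v)) := by
    intro v hv
    simp only [Finset.mem_filter, Finset.mem_range] at hv ⊢
    have hab' : (a : ℕ) ≤ (b : ℕ) := hab
    exact ⟨hv.1, by omega⟩
  have := Finset.card_le_card hsub
  show ((Finset.range (M+1)).filter (fun v => (b:ℕ) < Tc c v)).card - 1 ≤
    ((Finset.range (M+1)).filter (fun v => (a:ℕ) < Tc c v)).card - 1
  omega

lemma Tc_ext {M : ℕ} (c c' : Fin (M+1) → ℕ) (h : ∀ v : ℕ, Tc c v = Tc c' v) :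
    c = c' := by
  funext v
  have h1 := Tc_step c v
  have h2 := Tc_step c' v
  have h3 := h (v : ℕ)
  have h4 := h ((v : ℕ) + 1)
  omega

lemma sz_cnt {M N : ℕ} (μ : Fin N → Fin (M+1)) : sz (cnt μ) = N := by
  rw [sz]
  simp only [cnt]
  have h2 := Finset.card_eq_sum_card_fiberwise
    (f := μ) (s := Finset.univ) (t := Finset.univ) (fun l _ => Finset.mem_univ _)
  rw [Finset.card_univ, Fintype.card_fin] at h2
  exact h2.symm

lemma Tc_toAnti {M N : ℕ} {c : Fin (M+1) → ℕ} (h : sz c = N) (v : ℕ) :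
    Tc (cnt (toAnti c (N := N))) v = Tc c v := by
  rcases le_or_gt v M with hv | hv
  · rw [Tcnt]
    have hfil : (Finset.univ.filter (fun l : Fin N => v ≤ ((toAnti c l : Fin (M+1)) : ℕ)))
        = (Finset.univ.filter (fun l : Fin N => (l : ℕ) < Tc c v)) := by
      apply Finset.filter_congr
      intro l _
      exact le_toAnti_iff h l v hv
    rw [hfil, cardFinLt N (Tc c v) (by rw [← h, ← Tc_zero]; exact Tc_anti c (Nat.zero_le v))]
  · rw [Tc_big _ hv, Tc_big _ hv]

lemma cnt_toAnti {M N : ℕ} {c : Fin (M+1) → ℕ} (h : sz c = N) :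
    cnt (toAnti c (N := N)) = c :=
  Tc_ext _ _ (Tc_toAnti h)

lemma toAnti_cnt {M N : ℕ} {μ : Fin N → Fin (M+1)}
    (hμ : Antitone fun l => (μ l : ℕ)) : toAnti (cnt μ) (N := N) = μ :=
  cnt_inj toAnti_antitone hμ (cnt_toAnti (sz_cnt μ))

lemma chiSl2_zero : chiSl2 0 = 1 := by
  simp [chiSl2]

lemma prod_chi_eq {M N : ℕ} (μ : Fin N → Fin (M+1)) :
    ∏ v ∈ Finset.univ.image μ, chiSl2 ((Finset.univ.filter (fun l => μ l = v)).card)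
      = ∏ v : Fin (M+1), chiSl2 (cnt μ v) := by
  apply Finset.prod_subset (Finset.subset_univ _)
  intro v _ hv
  have : (Finset.univ.filter (fun l => μ l = v)).card = 0 := by
    rw [Finset.card_eq_zero, Finset.filter_eq_empty_iff]
    intro l _
    intro hl
    exact hv (Finset.mem_image.mpr ⟨l, Finset.mem_univ l, hl⟩)
  show chiSl2 (cnt μ v) = 1
  rw [cnt, this, chiSl2_zero]

lemma sum_val_eq {M N : ℕ} (μ : Fin N → Fin (M+1)) :
    ∑ l, ((μ l : Fin (M+1)) : ℕ) = wt (cnt μ) := by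
  rw [Finset.sum_comp (fun v : Fin (M+1) => (v : ℕ)) μ]
  rw [wt]
  rw [Finset.sum_subset (Finset.subset_univ (Finset.univ.image μ))]
  · exact Finset.sum_congr rfl fun v _ => by rw [smul_eq_mul, cnt, mul_comm]
  · intro v _ hv
    have : (Finset.univ.filter (fun l => μ l = v)).card = 0 := by
      rw [Finset.card_eq_zero, Finset.filter_eq_empty_iff]
      intro l _ hl
      exact hv (Finset.mem_image.mpr ⟨l, Finset.mem_univ l, hl⟩)
    rw [this, zero_smul]

lemma fermionic_inner_sum (M N : ℕ) (hN : N ≤ M) (f : (Fin (M+1) → ℕ) → KK) :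
    (∑ μ : Fin N → Fin (M+1),
      if Antitone (fun l => (μ l : ℕ)) then f (cnt μ) else 0)
    = ∑ c ∈ (Vset M).filter (fun c => sz c = N), f c := by
  rw [← Finset.sum_filter]
  apply Finset.sum_nbij' (i := fun μ => cnt μ) (j := fun c => toAnti c (N := N))
  · intro μ hμ
    rw [Finset.mem_filter] at hμ
    rw [Finset.mem_filter]
    refine ⟨mem_Vset.mpr fun v => ?_, sz_cnt μ⟩
    calc cnt μ v ≤ sz (cnt μ) := apply_le_sz _ v
    _ = N := sz_cnt μ
    _ ≤ M := hN
  · intro c hc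
    rw [Finset.mem_filter] at hc
    rw [Finset.mem_filter]
    exact ⟨Finset.mem_univ _, toAnti_antitone⟩
  · intro μ hμ
    rw [Finset.mem_filter] at hμ
    exact toAnti_cnt hμ.2
  · intro c hc
    rw [Finset.mem_filter] at hc
    exact cnt_toAnti hc.2
  · intro μ _
    rfl
lemma X_zpow_sum {ι : Type*} (s : Finset ι) (f : ι → ℤ) :
    (RatFunc.X : RatFunc ℚ) ^ (∑ i ∈ s, f i) = ∏ i ∈ s, (RatFunc.X : RatFunc ℚ) ^ (f i) := by
  classical
  induction s using Finset.cons_induction with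
  | empty => simp
  | cons i s hi ih =>
    rw [Finset.sum_cons, Finset.prod_cons, zpow_add₀ RatFunc.X_ne_zero, ih]

lemma prod_chi_expand {M : ℕ} (c : Fin (M+1) → ℕ) :
    ∏ v : Fin (M+1), chiSl2 (c v)
      = ∑ s ∈ Fintype.piFinset (fun v => Finset.range (c v + 1)),
          (RatFunc.X : RatFunc ℚ) ^ (2 * (∑ v : Fin (M+1), (s v : ℤ)) - (sz c : ℤ)) := by
  simp only [chiSl2]
  rw [Finset.prod_univ_sum]
  refine Finset.sum_congr rfl fun s _ => ?_
  rw [← X_zpow_sum]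
  congr 1
  rw [Finset.sum_sub_distrib, ← Finset.mul_sum, sz]
  push_cast
  ring

lemma coeff_fermionic (i M : ℕ) :
    PowerSeries.coeff (R := RatFunc ℚ) M (fermionicSideZ i M) =
      ∑ N ∈ Finset.range (M+1), if N % 2 = i then
        (∑ c ∈ (Vset M).filter (fun c => sz c = N),
          if M = N^2 + 4 * wt c then ∏ v : Fin (M+1), chiSl2 (c v) else 0) else 0 := by
  rw [fermionicSideZ, map_sum]
  refine Finset.sum_congr rfl fun N hN => ?_
  rw [Finset.mem_range, Nat.lt_succ_iff] at hN
  rw [apply_ite (PowerSeries.coeff (R := RatFunc ℚ) M), map_zero]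
  refine if_congr Iff.rfl ?_ rfl
  rw [map_sum]
  have hstep : ∀ μ : Fin N → Fin (M+1),
      PowerSeries.coeff (R := RatFunc ℚ) M
        (if Antitone (fun l => (μ l : ℕ)) then
          (PowerSeries.C (R := RatFunc ℚ) (∏ v ∈ Finset.univ.image μ,
              chiSl2 ((Finset.univ.filter (fun l => μ l = v)).card))) *
            (PowerSeries.X : PowerSeries (RatFunc ℚ)) ^ (N ^ 2 + 4 * ∑ l, (μ l : ℕ))
        else 0)
      = if Antitone (fun l => (μ l : ℕ)) then
          (if M = N^2 + 4 * wt (cnt μ) then ∏ v : Fin (M+1), chiSl2 (cnt μ v) else 0)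
        else 0 := by
    intro μ
    rw [apply_ite (PowerSeries.coeff (R := RatFunc ℚ) M), map_zero]
    refine if_congr Iff.rfl ?_ rfl
    rw [PowerSeries.coeff_C_mul, PowerSeries.coeff_X_pow, prod_chi_eq μ, sum_val_eq μ]
    rw [mul_ite, mul_one, mul_zero]
  rw [Finset.sum_congr rfl fun μ _ => hstep μ]
  exact fermionic_inner_sum M N hN (fun c => if M = N^2 + 4 * wt c then ∏ v : Fin (M+1), chiSl2 (c v) else 0)
lemma piFinset_eq_filter {M : ℕ} {c : Fin (M+1) → ℕ} (hc : c ∈ Vset M) :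
    Fintype.piFinset (fun v => Finset.range (c v + 1))
      = (Vset M).filter (fun s => ∀ v, s v ≤ c v) := by
  ext s
  simp only [Fintype.mem_piFinset, Finset.mem_range, Finset.mem_filter]
  constructor
  · intro h
    refine ⟨mem_Vset.mpr fun v => ?_, fun v => by have := h v; omega⟩
    have := h v
    have := mem_Vset.mp hc v
    omega
  · intro ⟨h1, h2⟩ v
    have := h2 v
    omega

lemma sz_sub_add {M : ℕ} {s c : Fin (M+1) → ℕ} (h : ∀ v, s v ≤ c v) :
    sz s + sz (c - s) = sz c := by
  rw [sz, sz, sz, ← Finset.sum_add_distrib]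
  refine Finset.sum_congr rfl fun v _ => ?_
  have := h v
  simp only [Pi.sub_apply]
  omega

lemma wt_sub_add {M : ℕ} {s c : Fin (M+1) → ℕ} (h : ∀ v, s v ≤ c v) :
    wt s + wt (c - s) = wt c := by
  rw [wt, wt, wt, ← Finset.sum_add_distrib]
  refine Finset.sum_congr rfl fun v _ => ?_
  have := h v
  simp only [Pi.sub_apply]
  rw [← Nat.mul_add]
  congr 1
  omega

lemma reindex (M N : ℕ) (hN : N ≤ M) :
    (∑ c ∈ (Vset M).filter (fun c => sz c = N),
      if M = N^2 + 4 * wt c then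
        ∑ s ∈ Fintype.piFinset (fun v => Finset.range (c v + 1)),
          (RatFunc.X : RatFunc ℚ) ^ (2 * (∑ v : Fin (M+1), (s v : ℤ)) - (N : ℤ))
       else 0)
    = ∑ p ∈ (Vset M ×ˢ Vset M).filter (fun p => sz p.1 + sz p.2 = N),
        (if M = N^2 + 4 * (wt p.1 + wt p.2) then
          (RatFunc.X : RatFunc ℚ) ^ ((sz p.1 : ℤ) - (sz p.2 : ℤ)) else 0) := by
  have step1 : (∑ c ∈ (Vset M).filter (fun c => sz c = N),
      if M = N^2 + 4 * wt c then
        ∑ s ∈ Fintype.piFinset (fun v => Finset.range (c v + 1)),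
          (RatFunc.X : RatFunc ℚ) ^ (2 * (∑ v : Fin (M+1), (s v : ℤ)) - (N : ℤ))
       else 0)
      = ∑ p ∈ (Vset M ×ˢ Vset M).filter (fun p => sz p.1 = N ∧ ∀ v, p.2 v ≤ p.1 v),
          (if M = N^2 + 4 * wt p.1 then
            (RatFunc.X : RatFunc ℚ) ^ (2 * (∑ v : Fin (M+1), (p.2 v : ℤ)) - (N : ℤ))
           else 0) := by
    rw [Finset.sum_filter, Finset.sum_filter, Finset.sum_product]
    refine Finset.sum_congr rfl fun c hc => ?_
    by_cases hsz : sz c = N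
    · rw [if_pos hsz]
      have hpi := piFinset_eq_filter hc
      by_cases hM : M = N^2 + 4 * wt c
      · rw [if_pos hM]
        rw [hpi, Finset.sum_filter]
        refine Finset.sum_congr rfl fun s _ => ?_
        by_cases hle : ∀ v, s v ≤ c v
        · rw [if_pos hle, if_pos ⟨hsz, hle⟩, if_pos hM]
        · rw [if_neg hle, if_neg (fun hh => hle hh.2)]
      · rw [if_neg hM]
        symm
        refine Finset.sum_eq_zero fun s _ => ?_
        by_cases hle : (sz c = N ∧ ∀ v, s v ≤ c v)
        · rw [if_pos hle, if_neg hM]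
        · rw [if_neg hle]
    · rw [if_neg hsz]
      symm
      refine Finset.sum_eq_zero fun s _ => ?_
      rw [if_neg (fun hh => hsz hh.1)]
  rw [step1]
  apply Finset.sum_nbij' (i := fun p => (p.2, p.1 - p.2)) (j := fun q => (q.1 + q.2, q.1))
  · intro p hp
    rw [Finset.mem_filter, Finset.mem_product] at hp
    obtain ⟨⟨hc, hs⟩, hszc, hle⟩ := hp
    rw [Finset.mem_filter, Finset.mem_product]
    dsimp only
    have h1 := sz_sub_add hle
    refine ⟨⟨hs, mem_Vset.mpr fun v => ?_⟩, by omega⟩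
    calc (p.1 - p.2) v ≤ p.1 v := by simp only [Pi.sub_apply]; omega
    _ ≤ M := mem_Vset.mp hc v
  · intro q hq
    rw [Finset.mem_filter, Finset.mem_product] at hq
    obtain ⟨⟨ha, hb⟩, hsz⟩ := hq
    rw [Finset.mem_filter, Finset.mem_product]
    dsimp only
    have h1 : sz (q.1 + q.2) = sz q.1 + sz q.2 := by
      rw [sz, sz, sz, ← Finset.sum_add_distrib]
      exact Finset.sum_congr rfl fun v _ => rfl
    refine ⟨⟨mem_Vset.mpr fun v => ?_, ha⟩, by omega, fun v => by simp only [Pi.add_apply]; omega⟩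
    have h2 : q.1 v ≤ sz q.1 := apply_le_sz _ v
    have h3 : q.2 v ≤ sz q.2 := apply_le_sz _ v
    simp only [Pi.add_apply]
    omega
  · intro p hp
    rw [Finset.mem_filter, Finset.mem_product] at hp
    obtain ⟨⟨hc, hs⟩, hszc, hle⟩ := hp
    ext v
    · simp only [Pi.add_apply, Pi.sub_apply]
      have := hle v
      omega
    · rfl
  · intro q hq
    rw [Finset.mem_filter, Finset.mem_product] at hq
    ext v
    · rfl
    · simp only [Pi.add_apply, Pi.sub_apply]
      omega
  · intro p hp
    rw [Finset.mem_filter, Finset.mem_product] at hp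
    obtain ⟨⟨hc, hs⟩, hszc, hle⟩ := hp
    have h1 := sz_sub_add hle
    have h2 := wt_sub_add hle
    dsimp only
    rw [← h2]
    refine if_congr Iff.rfl ?_ rfl
    congr 1
    have h3 : (sz p.2 : ℤ) = ∑ v : Fin (M+1), (p.2 v : ℤ) := by
      rw [sz]; push_cast; rfl
    rw [← h3]
    omega
lemma gcount_cast (M n d : ℕ) :
    (gcount M n d : KK) = ∑ a ∈ Vset M, if sz a = n ∧ 4 * wt a = d then (1:KK) else 0 := by
  rw [gcount, ← Finset.sum_filter, Finset.sum_const, nsmul_eq_mul, mul_one]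

lemma rhs_inner (M k np nm : ℕ) :
    (if k ≤ M then ∑ dd ∈ Finset.HasAntidiagonal.antidiagonal (M - k),
        (gcount M np dd.1 : KK) * (gcount M nm dd.2 : KK) else 0)
  = ∑ p ∈ Vset M ×ˢ Vset M,
      if sz p.1 = np ∧ sz p.2 = nm ∧ k + 4 * (wt p.1 + wt p.2) = M then (1:KK) else 0 := by
  rw [Finset.sum_product]
  split_ifs with hk
  · have hexp : ∀ dd : ℕ × ℕ, (gcount M np dd.1 : KK) * (gcount M nm dd.2 : KK)
        = ∑ a ∈ Vset M, ∑ b ∈ Vset M,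
            (if sz a = np ∧ 4*wt a = dd.1 then (1:KK) else 0) *
            (if sz b = nm ∧ 4*wt b = dd.2 then (1:KK) else 0) := by
      intro dd
      rw [gcount_cast, gcount_cast, Finset.sum_mul_sum]
    rw [Finset.sum_congr rfl fun dd _ => hexp dd, Finset.sum_comm]
    refine Finset.sum_congr rfl fun a _ => ?_
    rw [Finset.sum_comm]
    refine Finset.sum_congr rfl fun b _ => ?_
    by_cases hA : sz a = np ∧ sz b = nm
    · obtain ⟨h1, h2⟩ := hA
      have hterm : ∀ dd ∈ Finset.HasAntidiagonal.antidiagonal (M - k),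
          (if sz a = np ∧ 4*wt a = dd.1 then (1:KK) else 0) *
            (if sz b = nm ∧ 4*wt b = dd.2 then (1:KK) else 0)
          = if dd = (4 * wt a, 4 * wt b) then (1:KK) else 0 := by
        intro dd _
        by_cases hd : dd = (4 * wt a, 4 * wt b)
        · rw [if_pos hd, hd]
          rw [if_pos ⟨h1, rfl⟩, if_pos ⟨h2, rfl⟩, one_mul]
        · rw [if_neg hd]
          have : ¬(4 * wt a = dd.1) ∨ ¬(4 * wt b = dd.2) := by
            by_contra hc
            push_neg at hc
            exact hd (Prod.ext hc.1.symm hc.2.symm)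
          rcases this with h | h
          · rw [if_neg (fun hh => h hh.2), zero_mul]
          · rw [if_neg (fun hh : sz b = nm ∧ 4 * wt b = dd.2 => h hh.2), mul_zero]
      rw [Finset.sum_congr rfl hterm,
        Finset.sum_ite_eq' (Finset.HasAntidiagonal.antidiagonal (M-k)) ((4 * wt a, 4 * wt b) : ℕ × ℕ)
          (fun _ => (1:KK))]
      simp only [Finset.HasAntidiagonal.mem_antidiagonal]
      refine if_congr ⟨fun h => ⟨h1, h2, by omega⟩, fun h => by omega⟩ rfl rfl
    · rw [Finset.sum_eq_zero, if_neg (fun hh => hA ⟨hh.1, hh.2.1⟩)]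
      intro dd _
      by_cases ha : sz a = np ∧ 4*wt a = dd.1
      · rw [if_neg (fun hh : sz b = nm ∧ 4*wt b = dd.2 => hA ⟨ha.1, hh.1⟩), mul_zero]
      · rw [if_neg ha, zero_mul]
  · symm
    refine Finset.sum_eq_zero fun a _ => Finset.sum_eq_zero fun b _ => ?_
    rw [if_neg]
    rintro ⟨-, -, h3⟩
    omega

lemma coeff_spinon (i M : ℕ) :
    PowerSeries.coeff (R := RatFunc ℚ) M (spinonSideZ i M) =
      ∑ np ∈ Finset.range (M+1), ∑ nm ∈ Finset.range (M+1),
        if (np + nm) % 2 = i then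
          (RatFunc.X : RatFunc ℚ) ^ ((np:ℤ) - (nm:ℤ)) *
            ∑ p ∈ Vset M ×ˢ Vset M,
              (if sz p.1 = np ∧ sz p.2 = nm ∧ (np+nm)^2 + 4*(wt p.1 + wt p.2) = M
               then (1:KK) else 0)
        else 0 := by
  rw [spinonSideZ, map_sum]
  refine Finset.sum_congr rfl fun np hnp => ?_
  rw [map_sum]
  refine Finset.sum_congr rfl fun nm hnm => ?_
  rw [Finset.mem_range, Nat.lt_succ_iff] at hnp hnm
  rw [apply_ite (PowerSeries.coeff (R := RatFunc ℚ) M), map_zero]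
  refine if_congr Iff.rfl ?_ rfl
  have hre : (PowerSeries.C (R := RatFunc ℚ) ((RatFunc.X : RatFunc ℚ) ^ ((np : ℤ) - nm))) *
        (PowerSeries.X : PowerSeries (RatFunc ℚ)) ^ ((np + nm) ^ 2) *
        (∏ k ∈ Finset.Icc 1 np,
          (1 - (PowerSeries.X : PowerSeries (RatFunc ℚ)) ^ (4 * k)))⁻¹ *
        (∏ k ∈ Finset.Icc 1 nm,
          (1 - (PowerSeries.X : PowerSeries (RatFunc ℚ)) ^ (4 * k)))⁻¹
      = PowerSeries.C (R := RatFunc ℚ) ((RatFunc.X : RatFunc ℚ) ^ ((np : ℤ) - nm)) *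
          ((Fser np * Fser nm) * (PowerSeries.X : PowerSeries (RatFunc ℚ)) ^ ((np + nm) ^ 2)) := by
    rw [Fser, Fser, Pprod, Pprod]
    ring
  rw [hre, PowerSeries.coeff_C_mul, PowerSeries.coeff_mul_X_pow']
  congr 1
  rw [← rhs_inner M ((np+nm)^2) np nm]
  split_ifs with hk
  · rw [PowerSeries.coeff_mul]
    refine Finset.sum_congr rfl fun dd hdd => ?_
    rw [Finset.HasAntidiagonal.mem_antidiagonal] at hdd
    rw [coeff_Fser M np dd.1 hnp (by omega), coeff_Fser M nm dd.2 hnm (by omega)]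
  · rfl
lemma hswap {σ : Type*} (P : Prop) [Decidable P] (t : Finset σ) (f : σ → KK) :
    (if P then ∑ x ∈ t, f x else 0) = ∑ x ∈ t, (if P then f x else 0) := by
  split_ifs <;> simp

lemma main_lhs (i M : ℕ) :
    (∑ N ∈ Finset.range (M+1), if N % 2 = i then
      (∑ p ∈ (Vset M ×ˢ Vset M).filter (fun p => sz p.1 + sz p.2 = N),
        (if M = N^2 + 4 * (wt p.1 + wt p.2) then
          (RatFunc.X : RatFunc ℚ) ^ ((sz p.1 : ℤ) - (sz p.2 : ℤ)) else 0)) else 0)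
    = ∑ p ∈ Vset M ×ˢ Vset M,
        (if ((sz p.1 + sz p.2) % 2 = i ∧ M = (sz p.1 + sz p.2)^2 + 4 * (wt p.1 + wt p.2))
         then (RatFunc.X : RatFunc ℚ) ^ ((sz p.1 : ℤ) - (sz p.2 : ℤ)) else 0) := by
  rw [Finset.sum_congr rfl (fun N _ => by rw [Finset.sum_filter, hswap])]
  rw [Finset.sum_comm]
  refine Finset.sum_congr rfl fun p _ => ?_
  have hre : ∀ N, (if N % 2 = i then
        (if sz p.1 + sz p.2 = N then
          (if M = N^2 + 4 * (wt p.1 + wt p.2) then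
            (RatFunc.X : RatFunc ℚ) ^ ((sz p.1 : ℤ) - (sz p.2 : ℤ)) else 0) else 0) else 0)
      = if N = sz p.1 + sz p.2 then
          (if ((sz p.1 + sz p.2) % 2 = i ∧ M = (sz p.1 + sz p.2)^2 + 4 * (wt p.1 + wt p.2))
           then (RatFunc.X : RatFunc ℚ) ^ ((sz p.1 : ℤ) - (sz p.2 : ℤ)) else 0) else 0 := by
    intro N
    by_cases h1 : sz p.1 + sz p.2 = N
    · subst h1
      rw [if_pos rfl, if_pos rfl]
      by_cases h2 : (sz p.1 + sz p.2) % 2 = i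
      · rw [if_pos h2]
        by_cases h3 : M = (sz p.1 + sz p.2)^2 + 4 * (wt p.1 + wt p.2)
        · rw [if_pos h3, if_pos ⟨h2, h3⟩]
        · rw [if_neg h3, if_neg (fun hh => h3 hh.2)]
      · rw [if_neg h2, if_neg (fun hh => h2 hh.1)]
    · conv_rhs => rw [if_neg (show ¬ N = sz p.1 + sz p.2 from fun hh => h1 hh.symm)]
      by_cases h2 : N % 2 = i
      · rw [if_pos h2, if_neg h1]
      · rw [if_neg h2]
  rw [Finset.sum_congr rfl fun N _ => hre N]
  rw [Finset.sum_ite_eq' (Finset.range (M+1)) (sz p.1 + sz p.2)]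
  simp only [Finset.mem_range, Nat.lt_succ_iff]
  by_cases hs : sz p.1 + sz p.2 ≤ M
  · rw [if_pos hs]
  · rw [if_neg hs]
    symm
    rw [if_neg]
    rintro ⟨-, h3⟩
    have h4 : sz p.1 + sz p.2 ≤ (sz p.1 + sz p.2)^2 := Nat.le_self_pow (by norm_num) _
    omega

lemma main_rhs (i M : ℕ) :
    (∑ np ∈ Finset.range (M+1), ∑ nm ∈ Finset.range (M+1),
      if (np + nm) % 2 = i then
        (RatFunc.X : RatFunc ℚ) ^ ((np:ℤ) - (nm:ℤ)) *
          ∑ p ∈ Vset M ×ˢ Vset M,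
            (if sz p.1 = np ∧ sz p.2 = nm ∧ (np+nm)^2 + 4*(wt p.1 + wt p.2) = M
             then (1:KK) else 0)
      else 0)
    = ∑ p ∈ Vset M ×ˢ Vset M,
        (if ((sz p.1 + sz p.2) % 2 = i ∧ M = (sz p.1 + sz p.2)^2 + 4 * (wt p.1 + wt p.2))
         then (RatFunc.X : RatFunc ℚ) ^ ((sz p.1 : ℤ) - (sz p.2 : ℤ)) else 0) := by
  have hstep : ∀ np nm : ℕ, (if (np + nm) % 2 = i then
        (RatFunc.X : RatFunc ℚ) ^ ((np:ℤ) - (nm:ℤ)) *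
          ∑ p ∈ Vset M ×ˢ Vset M,
            (if sz p.1 = np ∧ sz p.2 = nm ∧ (np+nm)^2 + 4*(wt p.1 + wt p.2) = M
             then (1:KK) else 0)
      else 0)
      = ∑ p ∈ Vset M ×ˢ Vset M,
          (if (np + nm) % 2 = i then
            (if sz p.1 = np ∧ sz p.2 = nm ∧ (np+nm)^2 + 4*(wt p.1 + wt p.2) = M
             then (RatFunc.X : RatFunc ℚ) ^ ((np:ℤ) - (nm:ℤ)) else 0) else 0) := by
    intro np nm
    rw [Finset.mul_sum]
    rw [hswap]
    refine Finset.sum_congr rfl fun p _ => ?_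
    refine if_congr Iff.rfl ?_ rfl
    rw [mul_ite, mul_one, mul_zero]
  rw [Finset.sum_congr rfl (fun np _ => Finset.sum_congr rfl (fun nm _ => hstep np nm))]
  rw [Finset.sum_congr rfl (fun np _ => Finset.sum_comm), Finset.sum_comm]
  refine Finset.sum_congr rfl fun p _ => ?_
  have hre2 : ∀ np nm : ℕ, (if (np + nm) % 2 = i then
        (if sz p.1 = np ∧ sz p.2 = nm ∧ (np+nm)^2 + 4*(wt p.1 + wt p.2) = M
         then (RatFunc.X : RatFunc ℚ) ^ ((np:ℤ) - (nm:ℤ)) else 0) else 0)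
      = if nm = sz p.2 then (if np = sz p.1 then
          (if ((sz p.1 + sz p.2) % 2 = i ∧ M = (sz p.1 + sz p.2)^2 + 4 * (wt p.1 + wt p.2))
           then (RatFunc.X : RatFunc ℚ) ^ ((sz p.1 : ℤ) - (sz p.2 : ℤ)) else 0) else 0) else 0 := by
    intro np nm
    by_cases h2 : nm = sz p.2
    · subst h2
      rw [if_pos rfl]
      by_cases h1 : np = sz p.1
      · subst h1
        rw [if_pos rfl]
        by_cases h3 : (sz p.1 + sz p.2) % 2 = i
        · rw [if_pos h3]
          by_cases h4 : (sz p.1 + sz p.2)^2 + 4*(wt p.1 + wt p.2) = M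
          · rw [if_pos ⟨rfl, rfl, h4⟩, if_pos ⟨h3, h4.symm⟩]
          · rw [if_neg (fun hh => h4 hh.2.2), if_neg (fun hh => h4 hh.2.symm)]
        · rw [if_neg h3, if_neg (fun hh => h3 hh.1)]
      · by_cases h3 : (np + sz p.2) % 2 = i
        · rw [if_pos h3, if_neg (fun hh => h1 hh.1.symm), if_neg h1]
        · rw [if_neg h3, if_neg h1]
    · by_cases h3 : (np + nm) % 2 = i
      · rw [if_pos h3, if_neg (fun hh => h2 hh.2.1.symm), if_neg h2]
      · rw [if_neg h3, if_neg h2]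
  rw [Finset.sum_congr rfl (fun np _ => Finset.sum_congr rfl (fun nm _ => hre2 np nm))]
  rw [Finset.sum_congr rfl (fun np _ => Finset.sum_ite_eq' (Finset.range (M+1)) (sz p.2)
    (fun nm => if np = sz p.1 then
      (if ((sz p.1 + sz p.2) % 2 = i ∧ M = (sz p.1 + sz p.2)^2 + 4 * (wt p.1 + wt p.2))
       then (RatFunc.X : RatFunc ℚ) ^ ((sz p.1 : ℤ) - (sz p.2 : ℤ)) else 0) else 0))]
  simp only [Finset.mem_range, Nat.lt_succ_iff]
  rw [← hswap]
  by_cases hs2 : sz p.2 ≤ M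
  · rw [if_pos hs2]
    rw [Finset.sum_ite_eq' (Finset.range (M+1)) (sz p.1)
      (fun np => if ((sz p.1 + sz p.2) % 2 = i ∧ M = (sz p.1 + sz p.2)^2 + 4 * (wt p.1 + wt p.2))
       then (RatFunc.X : RatFunc ℚ) ^ ((sz p.1 : ℤ) - (sz p.2 : ℤ)) else 0)]
    simp only [Finset.mem_range, Nat.lt_succ_iff]
    by_cases hs1 : sz p.1 ≤ M
    · rw [if_pos hs1]
    · rw [if_neg hs1]
      symm
      rw [if_neg]
      rintro ⟨-, h3⟩
      have h4 : sz p.1 + sz p.2 ≤ (sz p.1 + sz p.2)^2 := Nat.le_self_pow (by norm_num) _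
      omega
  · rw [if_neg hs2]
    symm
    rw [if_neg]
    rintro ⟨-, h3⟩
    have h4 : sz p.1 + sz p.2 ≤ (sz p.1 + sz p.2)^2 := Nat.le_self_pow (by norm_num) _
    omega


end AuxRCI2

/-- refined character identity with `sl₂`-weight: for `i ∈ {0,1}`,
`Σ_{N ≡ i (2), ℓ(λ) ≤ N} q^{N²/4 − i/4 + |λ|} ∏_j χ_{n_j}(z)
 = Σ_{n⁺+n⁻ ≡ i (2)} z^{n⁺−n⁻} q^{(n⁺+n⁻)²/4 − i/4}/((q;q)_{n⁺}(q;q)_{n⁻})`,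
stated (after dividing by `q^{−i/4}` and substituting `q → q⁴`) coefficientwise as
an identity of formal power series in `q` with coefficients in `ℤ[z,z⁻¹] ⊂ ℚ(z)`. -/
theorem refined_character_identity (i : ℕ) (hi : i < 2) (M : ℕ) :
    PowerSeries.coeff (R := RatFunc ℚ) M (fermionicSideZ i M) =
      PowerSeries.coeff (R := RatFunc ℚ) M (spinonSideZ i M) := by
  classical
  rw [coeff_fermionic, coeff_spinon]
  have hL : ∀ N, N ≤ M →
      (∑ c ∈ (Vset M).filter (fun c => sz c = N),
        if M = N^2 + 4 * wt c then ∏ v : Fin (M+1), chiSl2 (c v) else 0)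
      = ∑ p ∈ (Vset M ×ˢ Vset M).filter (fun p => sz p.1 + sz p.2 = N),
          (if M = N^2 + 4 * (wt p.1 + wt p.2) then
            (RatFunc.X : RatFunc ℚ) ^ ((sz p.1 : ℤ) - (sz p.2 : ℤ)) else 0) := by
    intro N hN
    rw [← reindex M N hN]
    refine Finset.sum_congr rfl fun c hc => ?_
    rw [Finset.mem_filter] at hc
    refine if_congr Iff.rfl ?_ rfl
    rw [prod_chi_expand, hc.2]
  have hmain : (∑ N ∈ Finset.range (M+1), if N % 2 = i then
      (∑ c ∈ (Vset M).filter (fun c => sz c = N),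
        if M = N^2 + 4 * wt c then ∏ v : Fin (M+1), chiSl2 (c v) else 0) else 0)
      = ∑ N ∈ Finset.range (M+1), if N % 2 = i then
        (∑ p ∈ (Vset M ×ˢ Vset M).filter (fun p => sz p.1 + sz p.2 = N),
          (if M = N^2 + 4 * (wt p.1 + wt p.2) then
            (RatFunc.X : RatFunc ℚ) ^ ((sz p.1 : ℤ) - (sz p.2 : ℤ)) else 0)) else 0 := by
    refine Finset.sum_congr rfl fun N hN => ?_
    rw [Finset.mem_range, Nat.lt_succ_iff] at hN
    exact if_congr Iff.rfl (hL N hN) rfl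
  rw [hmain, main_lhs i M, ← main_rhs i M]
end
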